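/- Let λ* be a solution of min_Λ g with strict complementarity, E = E(λ*) a matrix whose columns form an orthonormal basis of the reduced space Z = {d ∈ ℝᵐ : aⱼᵀd = 0, j ∈ A(λ*)}. Suppose λ, μ ∈ Λ satisfy μ = gradient-projection of λ with step α and scaling S(λ), and λ = λ* + E x̃, μ = λ* + E ỹ for some x̃, ỹ. Then ỹ = x̃ − α S̃(λ) ∇̃g(λ), where ∇̃g = Eᵀ∇g and S̃(λ) = (Eᵀ S(λ)⁻¹ E)⁻¹; i.e., in the reduced space the projected step is an unconstrained scaled gradient descent. -/

import Mathlib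

open scoped RealInnerProductSpace
open Matrix

private lemma aux_mul7 {l m n : ℕ} (P : Matrix (Fin l) (Fin m) ℝ) (Q : Matrix (Fin m) (Fin n) ℝ)
    (v : EuclideanSpace ℝ (Fin n)) :
    Matrix.toEuclideanLin (P * Q) v = Matrix.toEuclideanLin P (Matrix.toEuclideanLin Q v) := by
  simp [Matrix.toEuclideanLin_apply, Matrix.mulVec_mulVec]

private lemma aux_adj7 {m n : ℕ} (E : Matrix (Fin m) (Fin n) ℝ) (x : EuclideanSpace ℝ (Fin m))
    (z : EuclideanSpace ℝ (Fin n)) :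
    ⟪x, Matrix.toEuclideanLin E z⟫ = ⟪Matrix.toEuclideanLin Eᵀ x, z⟫ := by
  rw [← Matrix.conjTranspose_eq_transpose_of_trivial,
    Matrix.toEuclideanLin_conjTranspose_eq_adjoint, LinearMap.adjoint_inner_left]

private lemma aux_one7 {n : ℕ} (v : EuclideanSpace ℝ (Fin n)) :
    Matrix.toEuclideanLin (1 : Matrix (Fin n) (Fin n) ℝ) v = v := by
  simp [Matrix.toEuclideanLin_apply]

private lemma aux_posdef7 {m mt : ℕ} (E : Matrix (Fin m) (Fin mt) ℝ) (hE : Eᵀ * E = 1)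
    (Si : Matrix (Fin m) (Fin m) ℝ) (hSi : Si.PosDef) : (Eᵀ * Si * E).PosDef := by
  rw [Matrix.posDef_iff_dotProduct_mulVec]
  constructor
  · have h1 : Siᵀ = Si := by
      have := hSi.isHermitian
      rwa [Matrix.IsHermitian, Matrix.conjTranspose_eq_transpose_of_trivial] at this
    show (Eᵀ * Si * E)ᴴ = _
    simp only [Matrix.conjTranspose_eq_transpose_of_trivial, Matrix.transpose_mul,
      Matrix.transpose_transpose, h1]
    rw [Matrix.mul_assoc]
  · intro x hx
    have hEx : E *ᵥ x ≠ 0 := by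
      intro h
      apply hx
      have : Eᵀ *ᵥ (E *ᵥ x) = 0 := by rw [h, Matrix.mulVec_zero]
      rwa [Matrix.mulVec_mulVec, hE, Matrix.one_mulVec] at this
    have := hSi.dotProduct_mulVec_pos hEx
    have hrw : star x ⬝ᵥ (Eᵀ * Si * E) *ᵥ x = star (E *ᵥ x) ⬝ᵥ Si *ᵥ (E *ᵥ x) := by
      rw [← Matrix.mulVec_mulVec, ← Matrix.mulVec_mulVec, Matrix.dotProduct_mulVec,
        Matrix.vecMul_transpose]
      simp [Matrix.dotProduct_mulVec, star_trivial]
    rw [hrw]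
    exact this

set_option maxHeartbeats 1000000 in
theorem stmt7 {m mt p : ℕ}
    (a : Fin p → EuclideanSpace ℝ (Fin m)) (b : Fin p → ℝ)
    (Λ : Set (EuclideanSpace ℝ (Fin m)))
    (hΛ : Λ = {lam | ∀ j, ⟪a j, lam⟫ ≤ b j}) (hΛne : Λ.Nonempty)
    (g : EuclideanSpace ℝ (Fin m) → ℝ)
    (g' : EuclideanSpace ℝ (Fin m) → EuclideanSpace ℝ (Fin m))
    (hg : ∀ x, HasGradientAt g (g' x) x)
    (hgcv : StrictConvexOn ℝ Set.univ g)
    (K : NNReal) (hlip : LipschitzWith K g')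
    (lstar : EuclideanSpace ℝ (Fin m)) (hmem : lstar ∈ Λ)
    (hminstar : IsMinOn g Λ lstar)
    (A : Finset (Fin p)) (hA : A = Finset.univ.filter fun j => ⟪a j, lstar⟫ = b j)
    -- strict complementarity at `lstar`
    (c : Fin p → ℝ) (hcpos : ∀ j ∈ A, 0 < c j)
    (hkkt : g' lstar = -∑ j ∈ A, c j • a j)
    -- `E` has orthonormal columns spanning the reduced space at `lstar`
    (E : Matrix (Fin m) (Fin mt) ℝ) (hE : Eᵀ * E = 1)
    (hErange : Set.range (fun v : EuclideanSpace ℝ (Fin mt) => Matrix.toEuclideanLin E v) =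
      {d : EuclideanSpace ℝ (Fin m) | ∀ j ∈ A, ⟪a j, d⟫ = 0})
    -- one gradient-projection step from `lam` to `μ` with scaling `S lam`, step `α`
    (S : EuclideanSpace ℝ (Fin m) → Matrix (Fin m) (Fin m) ℝ)
    (α : ℝ) (hα : 0 < α)
    (lam μ : EuclideanSpace ℝ (Fin m)) (hlam : lam ∈ Λ) (hμ : μ ∈ Λ)
    (hSpd : (S lam).PosDef)
    (hμmin : IsMinOn (fun y => ⟪g' lam, y - lam⟫ +
      (1 / (2 * α)) * ⟪y - lam, Matrix.toEuclideanLin (S lam)⁻¹ (y - lam)⟫) Λ μ)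
    -- both `lam` and `μ` have the same active set as `lstar`
    (hactlam : {j | ⟪a j, lam⟫ = b j} = {j | ⟪a j, lstar⟫ = b j})
    (hactμ : {j | ⟪a j, μ⟫ = b j} = {j | ⟪a j, lstar⟫ = b j})
    (xt yt : EuclideanSpace ℝ (Fin mt))
    (hlamx : lam = lstar + Matrix.toEuclideanLin E xt)
    (hμy : μ = lstar + Matrix.toEuclideanLin E yt) :
    yt = xt - α • Matrix.toEuclideanLin (Eᵀ * (S lam)⁻¹ * E)⁻¹
      (Matrix.toEuclideanLin Eᵀ (g' lam)) := by
  set Si := (S lam)⁻¹ with hSi_def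
  have hSipd : Si.PosDef := hSpd.inv
  set B := Matrix.toEuclideanLin Si with hB_def
  have hSit : Siᵀ = Si := by
    have := hSipd.isHermitian
    rwa [Matrix.IsHermitian, Matrix.conjTranspose_eq_transpose_of_trivial] at this
  have hSym : ∀ v w : EuclideanSpace ℝ (Fin m), ⟪v, B w⟫ = ⟪B v, w⟫ := by
    intro v w
    rw [hB_def, aux_adj7, hSit]
  -- reduced displacement
  set u : EuclideanSpace ℝ (Fin mt) := yt - xt with hu_def
  have hw : μ - lam = Matrix.toEuclideanLin E u := by
    rw [hμy, hlamx, hu_def, map_sub]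
    abel
  -- Step A : first-order condition along the reduced space
  have hL : ∀ z : EuclideanSpace ℝ (Fin mt),
      ⟪g' lam, Matrix.toEuclideanLin E z⟫ +
        (1 / α) * ⟪μ - lam, B (Matrix.toEuclideanLin E z)⟫ = 0 := by
    intro z
    set d := Matrix.toEuclideanLin E z with hd_def
    have hdZ : ∀ j ∈ A, ⟪a j, d⟫ = 0 := by
      have : d ∈ Set.range (fun v : EuclideanSpace ℝ (Fin mt) => Matrix.toEuclideanLin E v) :=
        ⟨z, rfl⟩
      rw [hErange] at this
      exact this
    set w := μ - lam with hw_def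
    set L : ℝ := ⟪g' lam, d⟫ + (1 / α) * ⟪w, B d⟫ with hL_def
    set C : ℝ := (1 / (2 * α)) * ⟪d, B d⟫ with hC_def
    -- eventually μ + t • d ∈ Λ
    have hev : ∀ᶠ t : ℝ in nhds 0, μ + t • d ∈ Λ := by
      rw [hΛ]
      simp only [Set.mem_setOf_eq]
      rw [Filter.eventually_all]
      intro j
      by_cases hj : ⟪a j, lstar⟫ = b j
      · have hjA : j ∈ A := by rw [hA, Finset.mem_filter]; exact ⟨Finset.mem_univ j, hj⟩
        have hμj : ⟪a j, μ⟫ = b j := by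
          have h1 : j ∈ {j | ⟪a j, lstar⟫ = b j} := hj
          rw [← hactμ] at h1
          exact h1
        have hdj : ⟪a j, d⟫ = 0 := hdZ j hjA
        filter_upwards with t
        rw [inner_add_right, real_inner_smul_right, hμj, hdj]
        simp
      · have hμj : ⟪a j, μ⟫ < b j := by
          have hne : ⟪a j, μ⟫ ≠ b j := by
            intro h
            have h1 : j ∈ {j | ⟪a j, μ⟫ = b j} := h
            rw [hactμ] at h1
            exact hj h1
          have hle : ⟪a j, μ⟫ ≤ b j := by
            rw [hΛ] at hμ
            exact hμ j
          exact lt_of_le_of_ne hle hne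
        have hcont : Continuous (fun t : ℝ => ⟪a j, μ⟫ + t * ⟪a j, d⟫) := by fun_prop
        have htend : Filter.Tendsto (fun t : ℝ => ⟪a j, μ⟫ + t * ⟪a j, d⟫) (nhds 0)
            (nhds (⟪a j, μ⟫)) := by
          have := hcont.tendsto 0
          simpa using this
        have := htend.eventually_lt_const hμj
        filter_upwards [this] with t ht
        show ⟪a j, μ + t • d⟫ ≤ b j
        rw [inner_add_right, real_inner_smul_right]
        exact le_of_lt ht
    -- quadratic expansion
    set q : EuclideanSpace ℝ (Fin m) → ℝ := fun y => ⟪g' lam, y - lam⟫ +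
      (1 / (2 * α)) * ⟪y - lam, B (y - lam)⟫ with hq_def
    have hexp : ∀ t : ℝ, q (μ + t • d) = q μ + (L * t + C * t ^ 2) := by
      intro t
      have h1 : μ + t • d - lam = w + t • d := by rw [hw_def]; abel
      have h2 : ⟪d, B w⟫ = ⟪w, B d⟫ := by rw [hSym d w, real_inner_comm]
      have e1 : ⟪g' lam, w + t • d⟫ = ⟪g' lam, w⟫ + t * ⟪g' lam, d⟫ := by
        rw [inner_add_right, real_inner_smul_right]
      have e2 : ⟪w + t • d, B (w + t • d)⟫ =
          ⟪w, B w⟫ + 2 * t * ⟪w, B d⟫ + t ^ 2 * ⟪d, B d⟫ := by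
        rw [map_add B, LinearMap.map_smul, inner_add_left, inner_add_right, inner_add_right,
          real_inner_smul_left, real_inner_smul_right, real_inner_smul_left,
          real_inner_smul_right, h2]
        ring
      have hqμ : q μ = ⟪g' lam, w⟫ + (1 / (2 * α)) * ⟪w, B w⟫ := rfl
      have hqt : q (μ + t • d) = ⟪g' lam, w + t • d⟫ +
          (1 / (2 * α)) * ⟪w + t • d, B (w + t • d)⟫ := by
        rw [hq_def]
        simp only [h1]
      rw [hqt, hqμ, e1, e2, hL_def, hC_def]
      have hα' : α ≠ 0 := ne_of_gt hα
      field_simp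
      ring
    have hflm : IsLocalMin (fun t : ℝ => L * t + C * t ^ 2) 0 := by
      have : ∀ᶠ t : ℝ in nhds 0, L * 0 + C * 0 ^ 2 ≤ L * t + C * t ^ 2 := by
        filter_upwards [hev] with t ht
        have h2 : q μ ≤ q (μ + t • d) := hμmin ht
        rw [hexp t] at h2
        nlinarith [h2]
      exact this
    have hderiv : HasDerivAt (fun t : ℝ => L * t + C * t ^ 2) (L + C * (2 * 0 ^ 1)) 0 := by
      have := ((hasDerivAt_id (0 : ℝ)).const_mul L).add ((hasDerivAt_pow 2 (0 : ℝ)).const_mul C)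
      simp at this ⊢
      exact this
    have : deriv (fun t : ℝ => L * t + C * t ^ 2) 0 = 0 := hflm.deriv_eq_zero
    rw [hderiv.deriv] at this
    simpa using this
  -- Step B: turn into the reduced-space equation
  set M := Eᵀ * Si * E with hM_def
  have hMpd : M.PosDef := aux_posdef7 E hE Si hSipd
  set Gt := Matrix.toEuclideanLin Eᵀ (g' lam) with hGt_def
  have hall : ∀ z : EuclideanSpace ℝ (Fin mt),
      ⟪Gt + (1 / α) • Matrix.toEuclideanLin M u, z⟫ = 0 := by
    intro z
    have ha1 : ⟪g' lam, Matrix.toEuclideanLin E z⟫ = ⟪Gt, z⟫ := by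
      rw [hGt_def]; exact aux_adj7 E (g' lam) z
    have ha2 : ⟪μ - lam, B (Matrix.toEuclideanLin E z)⟫ = ⟪Matrix.toEuclideanLin M u, z⟫ := by
      rw [hw, hSym, aux_adj7 E (B (Matrix.toEuclideanLin E u)) z]
      have hcomp : Matrix.toEuclideanLin M u =
          Matrix.toEuclideanLin Eᵀ (B (Matrix.toEuclideanLin E u)) := by
        rw [hM_def, hB_def, aux_mul7 (Eᵀ * Si) E, aux_mul7 Eᵀ Si]
      rw [hcomp]
    rw [inner_add_left, real_inner_smul_left, ← ha1, ← ha2]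
    exact hL z
  have hzero : Gt + (1 / α) • Matrix.toEuclideanLin M u = 0 := by
    have := hall (Gt + (1 / α) • Matrix.toEuclideanLin M u)
    exact inner_self_eq_zero.mp this
  have hMu : Matrix.toEuclideanLin M u = (-α) • Gt := by
    have hα' : α ≠ 0 := ne_of_gt hα
    have : (1 / α) • Matrix.toEuclideanLin M u = -Gt :=
      eq_neg_of_add_eq_zero_right hzero
    calc Matrix.toEuclideanLin M u = α • ((1 / α) • Matrix.toEuclideanLin M u) := by
          rw [smul_smul]; field_simp; rw [one_smul]
      _ = α • (-Gt) := by rw [this]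
      _ = (-α) • Gt := by rw [neg_smul, smul_neg]
  have hMinv : M⁻¹ * M = 1 := Matrix.nonsing_inv_mul M hMpd.det_pos.ne'.isUnit
  have hu : u = (-α) • Matrix.toEuclideanLin M⁻¹ Gt := by
    have h1 : Matrix.toEuclideanLin M⁻¹ (Matrix.toEuclideanLin M u) = u := by
      rw [← aux_mul7 M⁻¹ M u, hMinv, aux_one7]
    rw [← h1, hMu, LinearMap.map_smul]
  have hfin : yt - xt = -(α • Matrix.toEuclideanLin M⁻¹ Gt) := by
    rw [← hu_def, hu, neg_smul]
  have h2 := sub_eq_iff_eq_add.mp hfin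
  rw [h2]
  abel
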